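/- Let (A_τ, B_τ, C_τ) for τ = 1,...,T be finitely-valued random variables such that, conditioned on the sequence A^T = (A_1,...,A_T), the pairs (B_τ, C_τ) are mutually independent across τ with fixed memoryless conditional laws p(B_τ | A_τ) = p_{B|A} and p(C_τ | B_τ) = p_{C|B} (so that A^T → B^T → C^T is a Markov chain and the channel is memoryless and physically degraded). Then H(B^T) − H(C^T) ≤ ∑_{τ=1}^{T} ( H(B_τ) − H(C_τ) ), where B^T = (B_1,...,B_T) and C^T = (C_1,...,C_T), regardless of the (possibly non-i.i.d.) joint distribution of A^T. -/

import Mathlib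

open scoped BigOperators Classical

noncomputable section

/-- Probability of an event under a pmf `p` on a finite sample space. -/
def pr {Ω : Type*} [Fintype Ω] (p : Ω → ℝ) (E : Ω → Prop) : ℝ :=
  ∑ ω, if E ω then p ω else 0

/-- `p` is a probability mass function. -/
def IsPMF {Ω : Type*} [Fintype Ω] (p : Ω → ℝ) : Prop :=
  (∀ ω, 0 ≤ p ω) ∧ ∑ ω, p ω = 1

/-- Shannon entropy of a finitely-valued random variable `X` w.r.t. the pmf `p`. -/
def ent {Ω α : Type*} [Fintype Ω] [Fintype α] (p : Ω → ℝ) (X : Ω → α) : ℝ :=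
  ∑ a, Real.negMulLog (pr p (fun ω => X ω = a))

/-- Conditional Shannon entropy `H(X | Y) = H(X, Y) - H(Y)`. -/
def condEnt {Ω α β : Type*} [Fintype Ω] [Fintype α] [Fintype β]
    (p : Ω → ℝ) (X : Ω → α) (Y : Ω → β) : ℝ :=
  ent p (fun ω => (X ω, Y ω)) - ent p Y

/-- Mutual information `I(X; Y) = H(X) + H(Y) - H(X, Y)`. -/
def mutInfo {Ω α β : Type*} [Fintype Ω] [Fintype α] [Fintype β]
    (p : Ω → ℝ) (X : Ω → α) (Y : Ω → β) : ℝ :=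
  ent p X + ent p Y - ent p (fun ω => (X ω, Y ω))

/-- Conditional mutual information `I(X; Y | Z) = H(X|Z) + H(Y|Z) - H(X,Y|Z)`. -/
def condMutInfo {Ω α β γ : Type*} [Fintype Ω] [Fintype α] [Fintype β] [Fintype γ]
    (p : Ω → ℝ) (X : Ω → α) (Y : Ω → β) (Z : Ω → γ) : ℝ :=
  condEnt p X Z + condEnt p Y Z - condEnt p (fun ω => (X ω, Y ω)) Z

/-- `A → B → C` is a Markov chain: `A` and `C` are conditionally independent given `B`. -/
def MarkovChain {Ω α β γ : Type*} [Fintype Ω]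
    (p : Ω → ℝ) (A : Ω → α) (B : Ω → β) (C : Ω → γ) : Prop :=
  ∀ a b c,
    pr p (fun ω => A ω = a ∧ B ω = b ∧ C ω = c) * pr p (fun ω => B ω = b)
      = pr p (fun ω => A ω = a ∧ B ω = b) * pr p (fun ω => B ω = b ∧ C ω = c)

/-- Independence of two finitely-valued random variables. -/
def IndepRV {Ω α β : Type*} [Fintype Ω] (p : Ω → ℝ) (X : Ω → α) (Y : Ω → β) : Prop :=
  ∀ a b, pr p (fun ω => X ω = a ∧ Y ω = b)
    = pr p (fun ω => X ω = a) * pr p (fun ω => Y ω = b)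

end


noncomputable section MyAux

open Finset Real

variable {Ω ι β γ V U : Type*}

lemma my_pr_nonneg [Fintype Ω] {p : Ω → ℝ} (hp0 : ∀ ω, 0 ≤ p ω) (E : Ω → Prop) : 0 ≤ pr p E := by
  unfold pr
  apply Finset.sum_nonneg
  intro ω _
  split <;> simp [hp0 ω]

lemma my_pr_congr [Fintype Ω] (p : Ω → ℝ) {E F : Ω → Prop} (h : ∀ ω, E ω ↔ F ω) :
    pr p E = pr p F := by
  unfold pr
  simp only [h]

lemma my_pr_fiber [Fintype Ω] [Fintype γ] (p : Ω → ℝ) (E : Ω → Prop) (X : Ω → γ) :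
    ∑ v, pr p (fun ω => E ω ∧ X ω = v) = pr p E := by
  unfold pr
  rw [Finset.sum_comm]
  refine Finset.sum_congr rfl fun ω _ => ?_
  by_cases h : E ω <;> simp [h]

lemma my_pr_fiber_ite [Fintype Ω] [Fintype γ] (p : Ω → ℝ) (X : Ω → γ) (G : γ → Prop) :
    pr p (fun ω => G (X ω)) = ∑ v, if G v then pr p (fun ω => X ω = v) else 0 := by
  rw [← my_pr_fiber p (fun ω => G (X ω)) X]
  refine Finset.sum_congr rfl fun v _ => ?_
  by_cases h : G v
  · rw [if_pos h]
    exact my_pr_congr p fun ω => ⟨fun h2 => h2.2, fun h2 => ⟨h2 ▸ h, h2⟩⟩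
  · rw [if_neg h]
    have h0 : ∀ ω, (G (X ω) ∧ X ω = v) ↔ False := fun ω => ⟨fun h2 => h (h2.2 ▸ h2.1), False.elim⟩
    rw [my_pr_congr p h0]
    simp [pr]

lemma my_sum_prod_pi [Fintype ι] [Fintype γ] (f : ι → γ → ℝ) :
    ∑ x : ι → γ, ∏ i, f i (x i) = ∏ i, ∑ y, f i y :=
  (Fintype.prod_sum f).symm

lemma my_negMulLog_prod (s : Finset ι) (a : ι → ℝ) :
    Real.negMulLog (∏ i ∈ s, a i) = ∑ i ∈ s, (∏ j ∈ s.erase i, a j) * Real.negMulLog (a i) := by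
  induction s using Finset.induction_on with
  | empty => simp
  | insert i s hi ih =>
    rw [Finset.prod_insert hi, Real.negMulLog_mul, Finset.sum_insert hi, ih,
      Finset.erase_insert hi, Finset.mul_sum]
    congr 1
    refine Finset.sum_congr rfl fun j hj => ?_
    have hji : j ≠ i := fun h => hi (h ▸ hj)
    rw [Finset.erase_insert_of_ne hji.symm, Finset.prod_insert (fun h => hi (Finset.mem_of_mem_erase h))]
    ring

lemma my_entProd [Fintype ι] [Fintype γ] (f : ι → γ → ℝ) (h1 : ∀ i, ∑ y, f i y = 1) :
    ∑ x : ι → γ, Real.negMulLog (∏ i, f i (x i)) = ∑ i, ∑ y, Real.negMulLog (f i y) := by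
  have h : ∀ x : ι → γ, Real.negMulLog (∏ i, f i (x i))
      = ∑ i, (∏ j ∈ Finset.univ.erase i, f j (x j)) * Real.negMulLog (f i (x i)) :=
    fun x => my_negMulLog_prod Finset.univ (fun i => f i (x i))
  rw [Finset.sum_congr rfl fun x _ => h x, Finset.sum_comm]
  refine Finset.sum_congr rfl fun i _ => ?_
  have hx : ∀ x : ι → γ, (∏ j ∈ Finset.univ.erase i, f j (x j)) * Real.negMulLog (f i (x i))
      = ∏ j, (fun j y => if j = i then Real.negMulLog (f j y) else f j y) j (x j) := by
    intro x
    rw [← Finset.prod_erase_mul Finset.univ _ (Finset.mem_univ i)]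
    congr 1
    · refine Finset.prod_congr rfl fun j hj => ?_
      simp [Finset.ne_of_mem_erase hj]
    · simp
  rw [Finset.sum_congr rfl fun x _ => hx x,
    my_sum_prod_pi (fun j y => if j = i then Real.negMulLog (f j y) else f j y)]
  rw [Fintype.prod_eq_single i (fun j hj => by simp [hj, h1 j])]
  simp

lemma my_sum_pi_fix [Fintype ι] [Fintype γ] (f : ι → γ → ℝ) (h1 : ∀ i, ∑ y, f i y = 1)
    (i0 : ι) (z : γ) :
    ∑ x : ι → γ, (if x i0 = z then ∏ i, f i (x i) else 0) = f i0 z := by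
  have hx : ∀ x : ι → γ, (if x i0 = z then ∏ i, f i (x i) else 0)
      = ∏ i, (fun i y => if i = i0 then (if y = z then f i y else 0) else f i y) i (x i) := by
    intro x
    by_cases h : x i0 = z
    · rw [if_pos h]
      refine Finset.prod_congr rfl fun j _ => ?_
      by_cases hj : j = i0
      · subst hj; simp [h]
      · simp [hj]
    · rw [if_neg h]
      symm
      exact Finset.prod_eq_zero (Finset.mem_univ i0) (by simp [h])
  rw [Finset.sum_congr rfl fun x _ => hx x,
    my_sum_prod_pi (fun i y => if i = i0 then (if y = z then f i y else 0) else f i y)]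
  rw [Fintype.prod_eq_single i0 (fun j hj => by simp [hj, h1 j])]
  simp

lemma my_gibbs [Fintype V] {P Q : V → ℝ} (hP0 : ∀ v, 0 ≤ P v) (hQ0 : ∀ v, 0 ≤ Q v)
    (hPQ : ∀ v, Q v = 0 → P v = 0) (hsum : ∑ v, Q v ≤ ∑ v, P v) :
    ∑ v, Real.negMulLog (P v) ≤ ∑ v, -(P v * Real.log (Q v)) := by
  have key : ∀ v, Real.negMulLog (P v) - -(P v * Real.log (Q v)) ≤ Q v - P v := by
    intro v
    rcases eq_or_lt_of_le (hP0 v) with h | h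
    · simp only [← h, Real.negMulLog_zero, zero_mul, neg_zero, sub_zero]
      linarith [hQ0 v]
    · have hQpos : 0 < Q v := by
        rcases eq_or_lt_of_le (hQ0 v) with h2 | h2
        · exfalso; have := hPQ v h2.symm; linarith
        · exact h2
      have hlog : Real.log (Q v / P v) ≤ Q v / P v - 1 :=
        Real.log_le_sub_one_of_pos (by positivity)
      have heq : Real.negMulLog (P v) - -(P v * Real.log (Q v)) = P v * Real.log (Q v / P v) := by
        rw [Real.log_div (ne_of_gt hQpos) (ne_of_gt h), Real.negMulLog]
        ring
      rw [heq]
      have := mul_le_mul_of_nonneg_left hlog (le_of_lt h)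
      calc P v * Real.log (Q v / P v) ≤ P v * (Q v / P v - 1) := this
        _ = Q v - P v := by field_simp
  have h2 : ∑ v, (Real.negMulLog (P v) - -(P v * Real.log (Q v))) ≤ ∑ v, (Q v - P v) :=
    Finset.sum_le_sum fun v _ => key v
  rw [Finset.sum_sub_distrib, Finset.sum_sub_distrib] at h2
  linarith

lemma my_sum_group [Fintype V] [Fintype U] [DecidableEq U] (P : V → ℝ) (prj : V → U) (g : U → ℝ)
    (F : U → ℝ) (hF : ∀ u, F u = ∑ v, if prj v = u then P v else 0) :
    ∑ v, P v * g (prj v) = ∑ u, F u * g u := by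
  symm
  rw [Finset.sum_congr rfl fun u (_ : u ∈ Finset.univ) => congrArg (· * g u) (hF u)]
  calc ∑ u, (∑ v, if prj v = u then P v else 0) * g u
      = ∑ u, ∑ v, (if prj v = u then P v * g u else 0) := by
        refine Finset.sum_congr rfl fun u _ => ?_
        rw [Finset.sum_mul]
        exact Finset.sum_congr rfl fun v _ => by split <;> simp
    _ = ∑ v, ∑ u, (if prj v = u then P v * g u else 0) := Finset.sum_comm
    _ = ∑ v, P v * g (prj v) := by
        refine Finset.sum_congr rfl fun v _ => ?_
        simp

end MyAux

lemma sum_univ_indep {α : Type*} (i1 i2 : Fintype α) (f : α → ℝ) :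
    (@Finset.univ α i1).sum f = (@Finset.univ α i2).sum f := by
  rw [Subsingleton.elim i1 i2]

set_option linter.unusedSectionVars false
set_option linter.unusedVariables false
section MyKey

open Finset Real

variable {ι β γ : Type*} [Fintype ι] [Fintype β] [Fintype γ]

/-- product kernel -/
noncomputable def pR (r : β → γ → ℝ) (b : ι → β) (c : ι → γ) : ℝ := ∏ i, r (b i) (c i)

/-- joint distribution of (B^T, C^T) -/
noncomputable def pP (M : (ι → β) → ℝ) (r : β → γ → ℝ) (v : (ι → β) × (ι → γ)) : ℝ :=
  M v.1 * pR r v.1 v.2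

/-- marginal of C^T -/
noncomputable def pPC (M : (ι → β) → ℝ) (r : β → γ → ℝ) (c : ι → γ) : ℝ :=
  ∑ b, pP M r (b, c)

/-- marginal of B_i -/
noncomputable def ppb (M : (ι → β) → ℝ) (i : ι) (y : β) : ℝ := ∑ b, if b i = y then M b else 0

/-- joint of (B_i, C_i) -/
noncomputable def ppj (M : (ι → β) → ℝ) (r : β → γ → ℝ) (i : ι) (y : β) (z : γ) : ℝ :=
  ppb M i y * r y z

/-- marginal of C_i -/
noncomputable def ppc (M : (ι → β) → ℝ) (r : β → γ → ℝ) (i : ι) (z : γ) : ℝ :=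
  ∑ y, ppj M r i y z

/-- conditional law of B_i given C_i -/
noncomputable def ps (M : (ι → β) → ℝ) (r : β → γ → ℝ) (i : ι) (z : γ) (y : β) : ℝ :=
  ppj M r i y z / ppc M r i z

/-- comparison distribution for Gibbs -/
noncomputable def pQ (M : (ι → β) → ℝ) (r : β → γ → ℝ) (v : (ι → β) × (ι → γ)) : ℝ :=
  pPC M r v.2 * ∏ i, ps M r i (v.2 i) (v.1 i)

variable {M : (ι → β) → ℝ} {r : β → γ → ℝ}

lemma pR_sum (hr1 : ∀ y, ∑ z, r y z = 1) (b : ι → β) : ∑ c, pR r b c = 1 := by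
  unfold pR
  rw [my_sum_prod_pi (fun i z => r (b i) z)]
  simp [hr1]

lemma pR_nonneg (hr0 : ∀ y z, 0 ≤ r y z) (b : ι → β) (c : ι → γ) : 0 ≤ pR r b c :=
  Finset.prod_nonneg fun i _ => hr0 _ _

lemma pP_nonneg (hM0 : ∀ b, 0 ≤ M b) (hr0 : ∀ y z, 0 ≤ r y z) (v) : 0 ≤ pP M r v :=
  mul_nonneg (hM0 _) (pR_nonneg hr0 _ _)

lemma ppb_nonneg (hM0 : ∀ b, 0 ≤ M b) (i : ι) (y : β) : 0 ≤ ppb M i y :=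
  Finset.sum_nonneg fun b _ => by split <;> simp [hM0 b]

lemma ppj_nonneg (hM0 : ∀ b, 0 ≤ M b) (hr0 : ∀ y z, 0 ≤ r y z) (i : ι) (y : β) (z : γ) :
    0 ≤ ppj M r i y z := mul_nonneg (ppb_nonneg hM0 _ _) (hr0 _ _)

lemma ppc_nonneg (hM0 : ∀ b, 0 ≤ M b) (hr0 : ∀ y z, 0 ≤ r y z) (i : ι) (z : γ) :
    0 ≤ ppc M r i z := Finset.sum_nonneg fun y _ => ppj_nonneg hM0 hr0 i y z

lemma pPC_nonneg (hM0 : ∀ b, 0 ≤ M b) (hr0 : ∀ y z, 0 ≤ r y z) (c : ι → γ) :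
    0 ≤ pPC M r c := Finset.sum_nonneg fun b _ => pP_nonneg hM0 hr0 _

lemma ps_nonneg (hM0 : ∀ b, 0 ≤ M b) (hr0 : ∀ y z, 0 ≤ r y z) (i : ι) (z : γ) (y : β) :
    0 ≤ ps M r i z y := div_nonneg (ppj_nonneg hM0 hr0 i y z) (ppc_nonneg hM0 hr0 i z)

/-- marginal fiber of joint at one coordinate pair -/
lemma Mfib (hr1 : ∀ y, ∑ z, r y z = 1) (i : ι) (y : β) (z : γ) :
    ∑ v : (ι → β) × (ι → γ), (if v.1 i = y ∧ v.2 i = z then pP M r v else 0)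
      = ppj M r i y z := by
  rw [Fintype.sum_prod_type]
  have hb : ∀ b : ι → β,
      (∑ c : ι → γ, if b i = y ∧ c i = z then pP M r (b, c) else 0)
        = (if b i = y then M b else 0) * r y z := by
    intro b
    by_cases h : b i = y
    · simp only [h, true_and, if_pos]
      have : ∀ c : ι → γ, (if c i = z then pP M r (b, c) else 0)
          = M b * (if c i = z then pR r b c else 0) := by
        intro c; split <;> simp [pP]
      rw [Finset.sum_congr rfl fun c _ => this c, ← Finset.mul_sum]
      unfold pR
      rw [my_sum_pi_fix (fun j z' => r (b j) z') (fun j => hr1 (b j)) i z]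
      rw [h]
    · simp [h]
  rw [Finset.sum_congr rfl fun b _ => hb b, ← Finset.sum_mul]
  rfl

/-- fiber of joint at one C coordinate -/
lemma Cfib (hr1 : ∀ y, ∑ z, r y z = 1) (i : ι) (z : γ) :
    ∑ v : (ι → β) × (ι → γ), (if v.2 i = z then pP M r v else 0) = ppc M r i z := by
  unfold ppc
  rw [Finset.sum_congr rfl fun y (_ : y ∈ Finset.univ) => (Mfib hr1 i y z).symm, Finset.sum_comm]
  refine Finset.sum_congr rfl fun v _ => ?_
  by_cases h : v.2 i = z <;> simp [h]

lemma pP_marg_B (hr1 : ∀ y, ∑ z, r y z = 1) (b : ι → β) :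
    ∑ c, pP M r (b, c) = M b := by
  have h : ∀ c, pP M r (b, c) = M b * pR r b c := fun c => rfl
  rw [Finset.sum_congr rfl fun c _ => h c, ← Finset.mul_sum, pR_sum hr1 b, mul_one]

lemma pP_sum (hM1 : ∑ b, M b = 1) (hr1 : ∀ y, ∑ z, r y z = 1) :
    ∑ v, pP M r v = 1 := by
  rw [Fintype.sum_prod_type]
  rw [Finset.sum_congr rfl fun b _ => pP_marg_B hr1 b]
  exact hM1

lemma pPC_sum (hM1 : ∑ b, M b = 1) (hr1 : ∀ y, ∑ z, r y z = 1) :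
    ∑ c, pPC M r c = 1 := by
  unfold pPC
  rw [Finset.sum_comm]
  rw [Finset.sum_congr rfl fun b _ => pP_marg_B hr1 b]
  exact hM1

lemma ppc_eq (i : ι) (z : γ) : ppc M r i z = ∑ y, ppb M i y * r y z := rfl

/-- E5: joint entropy decomposition -/
lemma joint_ent (hM1 : ∑ b, M b = 1) (hr0 : ∀ y z, 0 ≤ r y z) (hr1 : ∀ y, ∑ z, r y z = 1) :
    ∑ v, Real.negMulLog (pP M r v)
      = ∑ b, Real.negMulLog (M b)
        + ∑ i, ∑ y, ppb M i y * ∑ z, Real.negMulLog (r y z) := by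
  rw [Fintype.sum_prod_type]
  have hb : ∀ b : ι → β, ∑ c, Real.negMulLog (pP M r (b, c))
      = Real.negMulLog (M b) + M b * ∑ i, ∑ z, Real.negMulLog (r (b i) z) := by
    intro b
    unfold pP
    have : ∀ c : ι → γ, Real.negMulLog (M b * pR r b c)
        = pR r b c * Real.negMulLog (M b) + M b * Real.negMulLog (pR r b c) :=
      fun c => Real.negMulLog_mul _ _
    rw [Finset.sum_congr rfl fun c _ => this c, Finset.sum_add_distrib, ← Finset.sum_mul,
      pR_sum hr1 b, one_mul, ← Finset.mul_sum]
    congr 1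
    unfold pR
    rw [my_entProd (fun i z => r (b i) z) (fun i => hr1 (b i))]
  rw [Finset.sum_congr rfl fun b _ => hb b, Finset.sum_add_distrib]
  congr 1
  have : ∀ b : ι → β, M b * ∑ i, ∑ z, Real.negMulLog (r (b i) z)
      = ∑ i, M b * ((fun y => ∑ z, Real.negMulLog (r y z)) (b i)) := by
    intro b; rw [Finset.mul_sum]
  rw [Finset.sum_congr rfl fun b _ => this b, Finset.sum_comm]
  refine Finset.sum_congr rfl fun i _ => ?_
  rw [my_sum_group M (fun b => b i) (fun y => ∑ z, Real.negMulLog (r y z))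
    (fun y => ppb M i y) (fun y => rfl)]

/-- per-letter pair entropy decomposition -/
lemma pair_ent (hr1 : ∀ y, ∑ z, r y z = 1) (i : ι) :
    ∑ y, ∑ z, Real.negMulLog (ppj M r i y z)
      = ∑ y, Real.negMulLog (ppb M i y)
        + ∑ y, ppb M i y * ∑ z, Real.negMulLog (r y z) := by
  have hy : ∀ y : β, ∑ z, Real.negMulLog (ppj M r i y z)
      = Real.negMulLog (ppb M i y) + ppb M i y * ∑ z, Real.negMulLog (r y z) := by
    intro y
    unfold ppj
    have : ∀ z : γ, Real.negMulLog (ppb M i y * r y z)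
        = r y z * Real.negMulLog (ppb M i y) + ppb M i y * Real.negMulLog (r y z) :=
      fun z => Real.negMulLog_mul _ _
    rw [Finset.sum_congr rfl fun z _ => this z, Finset.sum_add_distrib, ← Finset.sum_mul,
      hr1 y, one_mul, ← Finset.mul_sum]
  rw [Finset.sum_congr rfl fun y _ => hy y, Finset.sum_add_distrib]

end MyKey

section MyKey2

open Finset Real

variable {ι β γ : Type*} [Fintype ι] [Fintype β] [Fintype γ]
variable {M : (ι → β) → ℝ} {r : β → γ → ℝ}

lemma pP_le_ppj (hM0 : ∀ b, 0 ≤ M b) (hr0 : ∀ y z, 0 ≤ r y z) (hr1 : ∀ y, ∑ z, r y z = 1)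
    (v : (ι → β) × (ι → γ)) (i : ι) : pP M r v ≤ ppj M r i (v.1 i) (v.2 i) := by
  rw [← Mfib hr1 i (v.1 i) (v.2 i)]
  have := Finset.single_le_sum
    (f := fun v' : (ι → β) × (ι → γ) =>
      if v'.1 i = v.1 i ∧ v'.2 i = v.2 i then pP M r v' else 0)
    (fun v' _ => by split <;> simp [pP_nonneg hM0 hr0]) (Finset.mem_univ v)
  simpa using this

lemma ppj_le_ppc (hM0 : ∀ b, 0 ≤ M b) (hr0 : ∀ y z, 0 ≤ r y z) (i : ι) (y : β) (z : γ) :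
    ppj M r i y z ≤ ppc M r i z :=
  Finset.single_le_sum (f := fun y' => ppj M r i y' z)
    (fun y' _ => ppj_nonneg hM0 hr0 i y' z) (Finset.mem_univ y)

lemma pP_le_pPC (hM0 : ∀ b, 0 ≤ M b) (hr0 : ∀ y z, 0 ≤ r y z)
    (v : (ι → β) × (ι → γ)) : pP M r v ≤ pPC M r v.2 := by
  have := Finset.single_le_sum (f := fun b => pP M r (b, v.2))
    (fun b _ => pP_nonneg hM0 hr0 _) (Finset.mem_univ v.1)
  exact this

lemma ps_sum (i : ι) (z : γ) :
    ∑ y, ps M r i z y = if ppc M r i z = 0 then 0 else 1 := by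
  unfold ps
  rw [← Finset.sum_div]
  show ppc M r i z / ppc M r i z = _
  split
  · rename_i h; simp [h]
  · rename_i h; exact div_self h

/-- per-letter conditional entropy identity (the Gibbs cross term). -/
lemma condEnt_letter (hM0 : ∀ b, 0 ≤ M b) (hr0 : ∀ y z, 0 ≤ r y z)
    (hr1 : ∀ y, ∑ z, r y z = 1) (i : ι) :
    ∑ v : (ι → β) × (ι → γ), -(pP M r v * Real.log (ps M r i (v.2 i) (v.1 i)))
      = (∑ y, ∑ z, Real.negMulLog (ppj M r i y z)) - ∑ z, Real.negMulLog (ppc M r i z) := by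
  have ha : ∀ v : (ι → β) × (ι → γ), -(pP M r v * Real.log (ps M r i (v.2 i) (v.1 i)))
      = pP M r v * ((fun u : β × γ => -Real.log (ps M r i u.2 u.1)) ((v.1 i, v.2 i))) := by
    intro v; simp [mul_neg]
  have hfib : ∀ u : β × γ,
      ppj M r i u.1 u.2
        = ∑ v : (ι → β) × (ι → γ), if (v.1 i, v.2 i) = u then pP M r v else 0 := by
    intro u
    rw [← Mfib hr1 i u.1 u.2]
    exact Finset.sum_congr rfl fun v _ => (if_congr (by simp [Prod.ext_iff]) rfl rfl).symm
  rw [Finset.sum_congr rfl fun v _ => ha v,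
    my_sum_group (pP M r) (fun v => (v.1 i, v.2 i)) (fun u => -Real.log (ps M r i u.2 u.1))
    (fun u => ppj M r i u.1 u.2) hfib, Fintype.sum_prod_type]
  have hb : ∀ (y : β) (z : γ), ppj M r i y z * -Real.log (ps M r i z y)
      = Real.negMulLog (ppj M r i y z) + ppj M r i y z * Real.log (ppc M r i z) := by
    intro y z
    by_cases hj : ppj M r i y z = 0
    · simp [hj]
    · have hjp : 0 < ppj M r i y z := lt_of_le_of_ne (ppj_nonneg hM0 hr0 i y z) (Ne.symm hj)
      have hcp : 0 < ppc M r i z := lt_of_lt_of_le hjp (ppj_le_ppc hM0 hr0 i y z)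
      unfold ps
      rw [Real.log_div (ne_of_gt hjp) (ne_of_gt hcp), Real.negMulLog]
      ring
  rw [Finset.sum_congr rfl fun y (_ : y ∈ Finset.univ) =>
    Finset.sum_congr rfl fun z (_ : z ∈ Finset.univ) => hb y z]
  rw [Finset.sum_congr rfl fun y (_ : y ∈ Finset.univ) => Finset.sum_add_distrib,
    Finset.sum_add_distrib]
  have hz : ∀ z : γ, ∑ y, ppj M r i y z * Real.log (ppc M r i z)
      = -Real.negMulLog (ppc M r i z) := by
    intro z
    rw [← Finset.sum_mul]
    show ppc M r i z * Real.log (ppc M r i z) = _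
    rw [Real.negMulLog]
    ring
  have hW : ∑ y, ∑ z, ppj M r i y z * Real.log (ppc M r i z)
      = -∑ z, Real.negMulLog (ppc M r i z) := by
    rw [Finset.sum_comm, Finset.sum_congr rfl fun z _ => hz z, Finset.sum_neg_distrib]
  rw [hW]
  ring

theorem myKey (hM0 : ∀ b, 0 ≤ M b) (hM1 : ∑ b, M b = 1)
    (hr0 : ∀ y z, 0 ≤ r y z) (hr1 : ∀ y, ∑ z, r y z = 1) :
    ∑ b, Real.negMulLog (M b) - ∑ c, Real.negMulLog (pPC M r c)
      ≤ ∑ i, ((∑ y, Real.negMulLog (ppb M i y)) - ∑ z, Real.negMulLog (ppc M r i z)) := by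
  classical
  have hppos : ∀ v : (ι → β) × (ι → γ), pP M r v ≠ 0 → 0 < pP M r v :=
    fun v h => lt_of_le_of_ne (pP_nonneg hM0 hr0 v) (Ne.symm h)
  have hPCpos : ∀ v : (ι → β) × (ι → γ), pP M r v ≠ 0 → 0 < pPC M r v.2 :=
    fun v h => lt_of_lt_of_le (hppos v h) (pP_le_pPC hM0 hr0 v)
  have hjpos : ∀ (v : (ι → β) × (ι → γ)) (i : ι), pP M r v ≠ 0 →
      0 < ppj M r i (v.1 i) (v.2 i) :=
    fun v i h => lt_of_lt_of_le (hppos v h) (pP_le_ppj hM0 hr0 hr1 v i)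
  have hcpos : ∀ (v : (ι → β) × (ι → γ)) (i : ι), pP M r v ≠ 0 →
      0 < ppc M r i (v.2 i) :=
    fun v i h => lt_of_lt_of_le (hjpos v i h) (ppj_le_ppc hM0 hr0 i (v.1 i) (v.2 i))
  have hspos : ∀ (v : (ι → β) × (ι → γ)) (i : ι), pP M r v ≠ 0 →
      0 < ps M r i (v.2 i) (v.1 i) :=
    fun v i h => div_pos (hjpos v i h) (hcpos v i h)
  -- Gibbs hypotheses
  have hQ0 : ∀ v, 0 ≤ pQ M r v := fun v =>
    mul_nonneg (pPC_nonneg hM0 hr0 _) (Finset.prod_nonneg fun i _ => ps_nonneg hM0 hr0 _ _ _)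
  have hPQ : ∀ v, pQ M r v = 0 → pP M r v = 0 := by
    intro v
    contrapose!
    intro h
    exact ne_of_gt (mul_pos (hPCpos v h) (Finset.prod_pos fun i _ => hspos v i h))
  have hsum : ∑ v, pQ M r v ≤ ∑ v, pP M r v := by
    have h1 : ∑ v, pQ M r v
        = ∑ c : ι → γ, pPC M r c * ∑ b : ι → β, ∏ i, ps M r i (c i) (b i) := by
      rw [Fintype.sum_prod_type_right]
      refine Finset.sum_congr rfl fun c _ => ?_
      have h0 : ∀ b : ι → β, pQ M r (b, c) = pPC M r c * ∏ i, ps M r i (c i) (b i) :=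
        fun b => rfl
      rw [Finset.sum_congr rfl fun b _ => h0 b, ← Finset.mul_sum]
    rw [h1, pP_sum hM1 hr1, ← pPC_sum (M := M) (r := r) hM1 hr1]
    refine Finset.sum_le_sum fun c _ => ?_
    refine mul_le_of_le_one_right (pPC_nonneg hM0 hr0 c) ?_
    rw [my_sum_prod_pi (fun i y => ps M r i (c i) y)]
    refine Finset.prod_le_one (fun i _ => ?_) (fun i _ => ?_)
    · rw [ps_sum]; split <;> norm_num
    · rw [ps_sum]; split <;> norm_num
  have HG := my_gibbs (pP_nonneg hM0 hr0) hQ0 hPQ hsum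
  -- decompose log pQ
  have hdec : ∀ v : (ι → β) × (ι → γ), -(pP M r v * Real.log (pQ M r v))
      = -(pP M r v * Real.log (pPC M r v.2))
        + ∑ i, -(pP M r v * Real.log (ps M r i (v.2 i) (v.1 i))) := by
    intro v
    by_cases hv : pP M r v = 0
    · simp [hv]
    · have hlogQ : Real.log (pQ M r v)
          = Real.log (pPC M r v.2) + ∑ i, Real.log (ps M r i (v.2 i) (v.1 i)) := by
        unfold pQ
        rw [Real.log_mul (ne_of_gt (hPCpos v hv))
          (ne_of_gt (Finset.prod_pos fun i _ => hspos v i hv)),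
          Real.log_prod (fun i _ => ne_of_gt (hspos v i hv))]
      rw [hlogQ, mul_add, neg_add, Finset.mul_sum]
      congr 1
      rw [← Finset.sum_neg_distrib]
  rw [Finset.sum_congr rfl fun v _ => hdec v, Finset.sum_add_distrib] at HG
  -- first piece: entropy of C^T
  have h1 : ∑ v : (ι → β) × (ι → γ), -(pP M r v * Real.log (pPC M r v.2))
      = ∑ c, Real.negMulLog (pPC M r c) := by
    rw [Fintype.sum_prod_type_right]
    refine Finset.sum_congr rfl fun c _ => ?_
    have h0 : ∀ b, -(pP M r (b, c) * Real.log (pPC M r (b, c).2))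
        = -(pP M r (b, c) * Real.log (pPC M r c)) := fun b => rfl
    rw [Finset.sum_congr rfl fun b _ => h0 b, Finset.sum_neg_distrib, ← Finset.sum_mul]
    show -(pPC M r c * Real.log (pPC M r c)) = _
    rw [Real.negMulLog]
    ring
  rw [h1] at HG
  have hswap : (∑ v : (ι → β) × (ι → γ), ∑ i : ι,
        -(pP M r v * Real.log (ps M r i (v.2 i) (v.1 i))))
      = ∑ i : ι, ∑ v : (ι → β) × (ι → γ),
        -(pP M r v * Real.log (ps M r i (v.2 i) (v.1 i))) := Finset.sum_comm
  rw [hswap] at HG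
  rw [Finset.sum_congr rfl fun i (_ : i ∈ Finset.univ) => condEnt_letter hM0 hr0 hr1 i] at HG
  have hPL : ∀ i : ι, (∑ y, ∑ z, Real.negMulLog (ppj M r i y z))
        - ∑ z, Real.negMulLog (ppc M r i z)
      = ((∑ y, Real.negMulLog (ppb M i y)) - ∑ z, Real.negMulLog (ppc M r i z))
        + ∑ y, ppb M i y * ∑ z, Real.negMulLog (r y z) := by
    intro i
    rw [pair_ent hr1 i]
    ring
  rw [Finset.sum_congr rfl fun i (_ : i ∈ Finset.univ) => hPL i, Finset.sum_add_distrib] at HG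
  have HJ := joint_ent (M := M) (r := r) hM1 hr0 hr1
  linarith

end MyKey2

theorem stmt5 {Ω 𝒜 ℬ 𝒞 : Type*} [Fintype Ω] [Fintype 𝒜] [Fintype ℬ] [Fintype 𝒞]
    (T : ℕ) (p : Ω → ℝ) (hp : IsPMF p)
    (A : Fin T → Ω → 𝒜) (B : Fin T → Ω → ℬ) (C : Fin T → Ω → 𝒞)
    (q : 𝒜 → ℬ → ℝ) (r : ℬ → 𝒞 → ℝ)
    (hq0 : ∀ a b, 0 ≤ q a b) (hq1 : ∀ a, ∑ b, q a b = 1)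
    (hr0 : ∀ b c, 0 ≤ r b c) (hr1 : ∀ b, ∑ c, r b c = 1)
    (hmem : ∀ (a : Fin T → 𝒜) (b : Fin T → ℬ) (c : Fin T → 𝒞),
      pr p (fun ω => (∀ τ, A τ ω = a τ) ∧ (∀ τ, B τ ω = b τ) ∧ (∀ τ, C τ ω = c τ))
        = pr p (fun ω => ∀ τ, A τ ω = a τ) * ∏ τ, (q (a τ) (b τ) * r (b τ) (c τ))) :
    ent p (fun ω (τ : Fin T) => B τ ω) - ent p (fun ω (τ : Fin T) => C τ ω)
      ≤ ∑ τ, (ent p (B τ) - ent p (C τ)) := by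
  classical
  obtain ⟨hp0, hp1⟩ := hp
  -- the distribution of B^T
  have hM0 : ∀ b : Fin T → ℬ, 0 ≤ pr p (fun ω => (fun τ : Fin T => B τ ω) = b) :=
    fun b => my_pr_nonneg hp0 _
  have hprTrue : pr p (fun _ => True) = 1 := by
    unfold pr; simpa using hp1
  have hM1 : ∑ b : Fin T → ℬ, pr p (fun ω => (fun τ : Fin T => B τ ω) = b) = 1 := by
    have h := my_pr_fiber p (fun _ => True) (fun ω (τ : Fin T) => B τ ω)
    rw [hprTrue] at h
    rw [← h]
    exact Finset.sum_congr rfl fun b _ => my_pr_congr p fun ω => by simp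
  -- product structure of the joint law of (B^T, C^T)
  have hA : ∀ (b : Fin T → ℬ) (c : Fin T → 𝒞),
      pr p (fun ω => (fun ω' => ((fun τ : Fin T => B τ ω'), (fun τ : Fin T => C τ ω'))) ω = (b, c))
        = (∑ a : Fin T → 𝒜, pr p (fun ω => ∀ τ, A τ ω = a τ) * ∏ τ, q (a τ) (b τ))
          * ∏ τ, r (b τ) (c τ) := by
    intro b c
    have h1 := my_pr_fiber p (fun ω => (∀ τ, B τ ω = b τ) ∧ (∀ τ, C τ ω = c τ))
      (fun ω (τ : Fin T) => A τ ω)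
    have h2 : ∀ a : Fin T → 𝒜,
        pr p (fun ω => ((∀ τ, B τ ω = b τ) ∧ (∀ τ, C τ ω = c τ))
            ∧ (fun τ : Fin T => A τ ω) = a)
          = pr p (fun ω => ∀ τ, A τ ω = a τ) * (∏ τ, q (a τ) (b τ)) * ∏ τ, r (b τ) (c τ) := by
      intro a
      rw [my_pr_congr p
        (F := fun ω => (∀ τ, A τ ω = a τ) ∧ (∀ τ, B τ ω = b τ) ∧ (∀ τ, C τ ω = c τ))
        (fun ω => by simp only [funext_iff] <;> tauto)]
      rw [hmem a b c, Finset.prod_mul_distrib]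
      ring
    rw [Finset.sum_congr rfl fun a _ => h2 a] at h1
    have h3 : pr p (fun ω => (∀ τ, B τ ω = b τ) ∧ (∀ τ, C τ ω = c τ))
        = pr p (fun ω =>
            (fun ω' => ((fun τ : Fin T => B τ ω'), (fun τ : Fin T => C τ ω'))) ω = (b, c)) :=
      my_pr_congr p fun ω => by simp only [Prod.mk.injEq, funext_iff] <;> tauto
    rw [h3] at h1
    rw [← h1, ← Finset.sum_mul]
  have hMeq : ∀ b : Fin T → ℬ,
      pr p (fun ω => (fun τ : Fin T => B τ ω) = b)
        = ∑ a : Fin T → 𝒜, pr p (fun ω => ∀ τ, A τ ω = a τ) * ∏ τ, q (a τ) (b τ) := by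
    intro b
    have h1 := my_pr_fiber p (fun ω => (fun τ : Fin T => B τ ω) = b) (fun ω (τ : Fin T) => C τ ω)
    have h2 : ∀ c : Fin T → 𝒞,
        pr p (fun ω => (fun τ : Fin T => B τ ω) = b ∧ (fun τ : Fin T => C τ ω) = c)
          = (∑ a : Fin T → 𝒜, pr p (fun ω => ∀ τ, A τ ω = a τ) * ∏ τ, q (a τ) (b τ))
            * ∏ τ, r (b τ) (c τ) := by
      intro c
      refine Eq.trans ?_ (hA b c)
      exact my_pr_congr p fun ω => by simp only [Prod.mk.injEq, funext_iff] <;> tauto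
    rw [Finset.sum_congr rfl fun c _ => h2 c, ← Finset.mul_sum] at h1
    have hrsum : ∑ c : Fin T → 𝒞, ∏ τ, r (b τ) (c τ) = 1 :=
      (sum_univ_indep _ _ _).trans (pR_sum hr1 b)
    rw [hrsum, mul_one] at h1
    exact h1.symm
  have hprod : ∀ (b : Fin T → ℬ) (c : Fin T → 𝒞),
      pr p (fun ω => (fun ω' => ((fun τ : Fin T => B τ ω'), (fun τ : Fin T => C τ ω'))) ω = (b, c))
        = pP (fun b' => pr p (fun ω => (fun τ : Fin T => B τ ω) = b')) r (b, c) := by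
    intro b c
    rw [hA b c, ← hMeq b]
    rfl
  -- identify the entropies
  have e2 : ent p (fun ω (τ : Fin T) => C τ ω)
      = ∑ c : Fin T → 𝒞, Real.negMulLog
          (pPC (fun b' => pr p (fun ω => (fun τ : Fin T => B τ ω) = b')) r c) := by
    unfold ent
    refine Finset.sum_congr rfl fun c _ => ?_
    congr 1
    have h1 := my_pr_fiber p (fun ω => (fun τ : Fin T => C τ ω) = c) (fun ω (τ : Fin T) => B τ ω)
    have h2 : ∀ b : Fin T → ℬ,
        pr p (fun ω => (fun τ : Fin T => C τ ω) = c ∧ (fun τ : Fin T => B τ ω) = b)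
          = pP (fun b' => pr p (fun ω => (fun τ : Fin T => B τ ω) = b')) r (b, c) := by
      intro b
      refine Eq.trans ?_ (hprod b c)
      exact my_pr_congr p fun ω => by simp only [Prod.mk.injEq, funext_iff] <;> tauto
    rw [Finset.sum_congr rfl fun b _ => h2 b] at h1
    calc pr p (fun ω => (fun ω' (τ : Fin T) => C τ ω') ω = c)
        = pr p (fun ω => (fun τ : Fin T => C τ ω) = c) := my_pr_congr p fun ω => Iff.rfl
      _ = ∑ b : Fin T → ℬ,
            pP (fun b' => pr p (fun ω => (fun τ : Fin T => B τ ω) = b')) r (b, c) := h1.symm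
      _ = pPC (fun b' => pr p (fun ω => (fun τ : Fin T => B τ ω) = b')) r c :=
            sum_univ_indep _ _ _
  have e3 : ∀ τ : Fin T, ent p (B τ)
      = ∑ y, Real.negMulLog
          (ppb (fun b' => pr p (fun ω => (fun τ : Fin T => B τ ω) = b')) τ y) := by
    intro τ
    unfold ent
    refine Finset.sum_congr rfl fun y _ => ?_
    congr 1
    have h1 := my_pr_fiber_ite p (fun ω (σ : Fin T) => B σ ω) (fun b => b τ = y)
    have h2 : pr p (fun ω => B τ ω = y)
        = pr p (fun ω => (fun σ : Fin T => B σ ω) τ = y) := my_pr_congr p fun ω => Iff.rfl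
    rw [h2, h1]
    exact sum_univ_indep _ _ _
  have e4 : ∀ τ : Fin T, ent p (C τ)
      = ∑ z, Real.negMulLog
          (ppc (fun b' => pr p (fun ω => (fun τ : Fin T => B τ ω) = b')) r τ z) := by
    intro τ
    unfold ent
    refine Finset.sum_congr rfl fun z _ => ?_
    congr 1
    have h1 := my_pr_fiber_ite p
      (fun ω => ((fun σ : Fin T => B σ ω), (fun σ : Fin T => C σ ω))) (fun v => v.2 τ = z)
    have h2 : pr p (fun ω => C τ ω = z)
        = pr p (fun ω =>
            ((fun ω' => ((fun σ : Fin T => B σ ω'), (fun σ : Fin T => C σ ω'))) ω).2 τ = z) :=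
      my_pr_congr p fun ω => Iff.rfl
    rw [h2, h1]
    have h3 : ∀ v : (Fin T → ℬ) × (Fin T → 𝒞),
        (if v.2 τ = z then
            pr p (fun ω => ((fun σ : Fin T => B σ ω), (fun σ : Fin T => C σ ω)) = v) else 0)
          = (if v.2 τ = z then
              pP (fun b' => pr p (fun ω => (fun τ : Fin T => B τ ω) = b')) r v else 0) := by
      intro v
      split
      · exact hprod v.1 v.2
      · rfl
    rw [Finset.sum_congr rfl fun v _ => h3 v]
    exact (sum_univ_indep _ _ _).trans (Cfib hr1 τ z)
  -- apply the key inequality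
  have KEY := myKey (M := fun b' => pr p (fun ω => (fun τ : Fin T => B τ ω) = b')) (r := r)
    hM0 ((sum_univ_indep _ _ _).trans hM1) hr0 hr1
  have e34 : ∀ τ : Fin T, ent p (B τ) - ent p (C τ)
      = (∑ y, Real.negMulLog
            (ppb (fun b' => pr p (fun ω => (fun τ : Fin T => B τ ω) = b')) τ y))
        - ∑ z, Real.negMulLog
            (ppc (fun b' => pr p (fun ω => (fun τ : Fin T => B τ ω) = b')) r τ z) :=
    fun τ => by rw [e3 τ, e4 τ]
  rw [Finset.sum_congr rfl fun τ (_ : τ ∈ Finset.univ) => e34 τ, e2]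
  refine le_trans (le_of_eq ?_) KEY
  exact congrArg₂ (fun x y => x - y) (sum_univ_indep _ _ _) (sum_univ_indep _ _ _)
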